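/- Let λ > 0, G > 0, and let g_1, …, g_T ∈ ℝ^d with ‖g_t‖ ≤ G for all t. Partition the rounds greedily into blocks: accumulate Z = ∑ g_t within a block, closing the block as soon as ‖Z‖ > max{λ, G}. Then the total number of blocks intersecting any interval [a, b] is at most 2 + (∑_{t=a}^{b} ‖g_t‖)/max{λ, G}, and each closed block's accumulated vector Z satisfies ‖Z‖ ≤ max{λ, G} + G. -/

import Mathlib

/-- Greedy gradient-accumulation blocks with threshold `max{λ, G}`: at most
`2 + (∑_{t=a}^b ‖g_t‖)/max{λ,G}` blocks intersect any interval `[a,b]`, and each closed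
block's accumulated gradient has norm at most `max{λ,G} + G`. -/
theorem stmt16 {E : Type*} [NormedAddCommGroup E]
    (lam G : ℝ) (hlam : 0 < lam) (hG : 0 < G)
    (g : ℕ → E) (hg : ∀ t, ‖g t‖ ≤ G)
    (s : ℕ → ℕ) (hs0 : s 0 = 1) (hmono : StrictMono s)
    (N : ℕ)
    (hclose : ∀ j < N, max lam G < ‖∑ t ∈ Finset.Ico (s j) (s (j + 1)), g t‖)
    (hpre : ∀ j < N, ∀ r : ℕ, s j ≤ r → r + 1 < s (j + 1) →
      ‖∑ t ∈ Finset.Ico (s j) (r + 1), g t‖ ≤ max lam G) :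
    (∀ a b : ℕ,
      (((Finset.range N).filter
          (fun j => ((Finset.Ico (s j) (s (j + 1))) ∩ Finset.Icc a b).Nonempty)).card : ℝ)
        ≤ 2 + (∑ t ∈ Finset.Icc a b, ‖g t‖) / max lam G) ∧
    (∀ j < N, ‖∑ t ∈ Finset.Ico (s j) (s (j + 1)), g t‖ ≤ max lam G + G) := by
  have hM : 0 < max lam G := lt_of_lt_of_le hlam (le_max_left _ _)
  have hdisj : ∀ i j : ℕ, i ≠ j →
      Disjoint (Finset.Ico (s i) (s (i + 1))) (Finset.Ico (s j) (s (j + 1))) := by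
    intro i j hij
    rw [Finset.disjoint_left]
    intro t ht ht'
    simp only [Finset.mem_Ico] at ht ht'
    rcases hij.lt_or_gt with h | h
    · have := hmono.monotone (show i + 1 ≤ j from h)
      omega
    · have := hmono.monotone (show j + 1 ≤ i from h)
      omega
  constructor
  · intro a b
    set S := (Finset.range N).filter
        (fun j => ((Finset.Ico (s j) (s (j + 1))) ∩ Finset.Icc a b).Nonempty) with hS
    set C := S.filter (fun j => a ≤ s j ∧ s (j + 1) ≤ b + 1) with hC
    have hCS : C ⊆ S := Finset.filter_subset _ _
    have hmemS : ∀ j ∈ S, j < N ∧ ∃ t, s j ≤ t ∧ t < s (j + 1) ∧ a ≤ t ∧ t ≤ b := by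
      intro j hj
      rw [hS, Finset.mem_filter, Finset.mem_range] at hj
      obtain ⟨hjN, ⟨t, ht⟩⟩ := hj
      simp only [Finset.mem_inter, Finset.mem_Ico, Finset.mem_Icc] at ht
      exact ⟨hjN, t, ht.1.1, ht.1.2, ht.2.1, ht.2.2⟩
    -- at most 2 elements of S \ C
    have h2 : (S \ C).card ≤ 2 := by
      have hinj : Set.InjOn (fun j => decide (s j < a)) ((S \ C) : Finset ℕ) := by
        intro i hi j hj hij
        simp only [Finset.coe_sdiff, Set.mem_diff, Finset.mem_coe] at hi hj
        obtain ⟨hiS, hiC⟩ := hi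
        obtain ⟨hjS, hjC⟩ := hj
        obtain ⟨hiN, ti, hti⟩ := hmemS i hiS
        obtain ⟨hjN, tj, htj⟩ := hmemS j hjS
        have hiC' : ¬(a ≤ s i ∧ s (i + 1) ≤ b + 1) := by
          intro h; exact hiC (by rw [hC, Finset.mem_filter]; exact ⟨hiS, h⟩)
        have hjC' : ¬(a ≤ s j ∧ s (j + 1) ≤ b + 1) := by
          intro h; exact hjC (by rw [hC, Finset.mem_filter]; exact ⟨hjS, h⟩)
        by_contra hne
        have hd := hdisj i j hne
        rw [Finset.disjoint_left] at hd
        simp only [decide_eq_decide] at hij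
        by_cases hia : s i < a
        · have hja : s j < a := hij.mp hia
          have hai : a ∈ Finset.Ico (s i) (s (i + 1)) := Finset.mem_Ico.mpr ⟨by omega, by omega⟩
          have haj : a ∈ Finset.Ico (s j) (s (j + 1)) := Finset.mem_Ico.mpr ⟨by omega, by omega⟩
          exact hd hai haj
        · have hja : ¬ s j < a := fun h => hia (hij.mpr h)
          have hib : b + 1 < s (i + 1) := by
            by_contra hb; exact hiC' ⟨by omega, by omega⟩
          have hjb : b + 1 < s (j + 1) := by
            by_contra hb; exact hjC' ⟨by omega, by omega⟩
          have hbi : b ∈ Finset.Ico (s i) (s (i + 1)) := Finset.mem_Ico.mpr ⟨by omega, by omega⟩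
          have hbj : b ∈ Finset.Ico (s j) (s (j + 1)) := Finset.mem_Ico.mpr ⟨by omega, by omega⟩
          exact hd hbi hbj
      have := Finset.card_le_card_of_injOn (fun j => decide (s j < a))
        (fun _ _ => Finset.mem_univ _) hinj
      simpa using this
    have hcard : S.card ≤ 2 + C.card := by
      have := Finset.card_sdiff_add_card_eq_card hCS
      omega
    -- sum bound on C
    have key : (C.card : ℝ) * max lam G ≤ ∑ t ∈ Finset.Icc a b, ‖g t‖ := by
      have step1 : (C.card : ℝ) * max lam G
          ≤ ∑ j ∈ C, ∑ t ∈ Finset.Ico (s j) (s (j + 1)), ‖g t‖ := by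
        rw [show (C.card : ℝ) * max lam G = ∑ _j ∈ C, max lam G by
          rw [Finset.sum_const, nsmul_eq_mul]]
        refine Finset.sum_le_sum fun j hj => ?_
        have hjN : j < N := (hmemS j (hCS hj)).1
        calc max lam G ≤ ‖∑ t ∈ Finset.Ico (s j) (s (j + 1)), g t‖ :=
              le_of_lt (hclose j hjN)
          _ ≤ ∑ t ∈ Finset.Ico (s j) (s (j + 1)), ‖g t‖ := norm_sum_le _ _
      have step2 : ∑ j ∈ C, ∑ t ∈ Finset.Ico (s j) (s (j + 1)), ‖g t‖
          = ∑ t ∈ C.biUnion (fun j => Finset.Ico (s j) (s (j + 1))), ‖g t‖ :=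
        (Finset.sum_biUnion (fun i _ j _ hij => hdisj i j hij)).symm
      have step3 : C.biUnion (fun j => Finset.Ico (s j) (s (j + 1))) ⊆ Finset.Icc a b := by
        intro t ht
        rw [Finset.mem_biUnion] at ht
        obtain ⟨j, hj, htj⟩ := ht
        rw [hC, Finset.mem_filter] at hj
        rw [Finset.mem_Ico] at htj
        rw [Finset.mem_Icc]
        omega
      calc (C.card : ℝ) * max lam G
          ≤ ∑ t ∈ C.biUnion (fun j => Finset.Ico (s j) (s (j + 1))), ‖g t‖ := by
            rw [← step2]; exact step1
        _ ≤ ∑ t ∈ Finset.Icc a b, ‖g t‖ :=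
            Finset.sum_le_sum_of_subset_of_nonneg step3 (fun t _ _ => norm_nonneg _)
    have hC' : (C.card : ℝ) ≤ (∑ t ∈ Finset.Icc a b, ‖g t‖) / max lam G :=
      (le_div_iff₀ hM).mpr key
    calc (S.card : ℝ) ≤ 2 + (C.card : ℝ) := by exact_mod_cast hcard
      _ ≤ 2 + (∑ t ∈ Finset.Icc a b, ‖g t‖) / max lam G := by linarith
  · intro j hj
    have h1 : s j < s (j + 1) := hmono (Nat.lt_succ_self j)
    by_cases h : s j + 1 = s (j + 1)
    · rw [← h]
      rw [show Finset.Ico (s j) (s j + 1) = {s j} from by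
        rw [Finset.Ico_add_one_right_eq_Icc, Finset.Icc_self]]
      rw [Finset.sum_singleton]
      have := hg (s j)
      linarith [le_max_right lam G, hlam, lt_of_lt_of_le hlam (le_max_left lam G)]
    · have h1' : s j + 2 ≤ s (j + 1) := by omega
      obtain ⟨m, hm⟩ : ∃ m, s (j + 1) = m + 1 := ⟨s (j + 1) - 1, by omega⟩
      have hp := hpre j hj (m - 1) (by omega) (by omega)
      rw [show m - 1 + 1 = m from by omega] at hp
      rw [hm, Finset.sum_Ico_succ_top (by omega : s j ≤ m)]
      calc ‖(∑ t ∈ Finset.Ico (s j) m, g t) + g m‖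
          ≤ ‖∑ t ∈ Finset.Ico (s j) m, g t‖ + ‖g m‖ := norm_add_le _ _
        _ ≤ max lam G + G := add_le_add hp (hg m)
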